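/- arXiv:1411.1966 — 4 statements merged into one kernel-verified Lean document; each statement's English description precedes it below -/
import Mathlib

section
/- The node set P_m = {z_i : 0 ≤ i < b^m} equals the set of integer multiples {j · z_{b^{m-1}} mod 1 : 0 ≤ j < b^m}, i.e., P_m is the node set of a rank-1 lattice generated by z_{b^{m-1}}. -/
section aux

variable {b : ℕ}

/-- digit extraction from `Nat.digits`. -/
lemma getD_digits_eq (hb : 1 < b) : ∀ (ℓ i : ℕ), (Nat.digits b i).getD ℓ 0 = i / b ^ ℓ % b := by
  intro ℓ
  induction ℓ with
  | zero =>
    intro i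
    rcases Nat.eq_zero_or_pos i with hi | hi
    · simp [hi]
    · rw [Nat.digits_def' hb hi]; simp
  | succ k ih =>
    intro i
    rcases Nat.eq_zero_or_pos i with hi | hi
    · simp [hi]
    · rw [Nat.digits_def' hb hi]
      simp only [List.getD_cons_succ]
      rw [ih (i / b), Nat.div_div_eq_div_mul, pow_succ, mul_comm (b^k) b]

lemma digits_len_le (hb : 1 < b) {i m : ℕ} (h : i < b ^ m) :
    (Nat.digits b i).length ≤ m := by
  by_contra hc
  push_neg at hc
  rcases Nat.eq_zero_or_pos i with hi | hi
  · simp [hi] at hc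
  · have h1 : b ^ (Nat.digits b i).length ≤ b * i :=
      Nat.base_pow_length_digits_le b i hb hi.ne'
    have h2 : b * i < b ^ (m + 1) := by
      calc b * i < b * b ^ m := Nat.mul_lt_mul_of_pos_left h (by omega)
        _ = b ^ (m + 1) := by rw [pow_succ]; ring
    have h3 : b ^ (m + 1) ≤ b ^ (Nat.digits b i).length :=
      Nat.pow_le_pow_right (by omega) (by omega)
    omega

lemma sum_digits_lt (hb : 1 < b) {m : ℕ} (a : ℕ → ℕ) (ha : ∀ t, t < m → a t < b) :
    ∑ t ∈ Finset.range m, a t * b ^ t < b ^ m := by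
  induction m with
  | zero => simp
  | succ n ih =>
    rw [Finset.sum_range_succ]
    have h1 : ∑ t ∈ Finset.range n, a t * b ^ t < b ^ n :=
      ih (fun t ht => ha t (by omega))
    have h2 : a n * b ^ n + b ^ n ≤ b ^ (n + 1) := by
      have : (a n + 1) * b ^ n ≤ b * b ^ n :=
        Nat.mul_le_mul_right _ (ha n (by omega))
      rw [pow_succ]
      nlinarith [pow_pos (by omega : 0 < b) n]
    omega

/-- extracting the `k`-th digit of a digit sum -/
lemma digit_of_sum (hb : 1 < b) :
    ∀ (k m : ℕ) (a : ℕ → ℕ), (∀ t, t < m → a t < b) → k < m →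
      (∑ t ∈ Finset.range m, a t * b ^ t) / b ^ k % b = a k := by
  intro k
  induction k with
  | zero =>
    intro m a ha hk
    obtain ⟨n, rfl⟩ : ∃ n, m = n + 1 := ⟨m - 1, by omega⟩
    rw [Finset.sum_range_succ']
    simp only [pow_zero, mul_one, pow_succ]
    have : ∑ i ∈ Finset.range n, a (i + 1) * (b ^ i * b) =
        (∑ i ∈ Finset.range n, a (i + 1) * b ^ i) * b := by
      rw [Finset.sum_mul]
      exact Finset.sum_congr rfl fun i _ => by ring
    rw [this, Nat.div_one, add_comm, Nat.add_mul_mod_self_right, Nat.mod_eq_of_lt (ha 0 (by omega))]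
  | succ k ih =>
    intro m a ha hk
    obtain ⟨n, rfl⟩ : ∃ n, m = n + 1 := ⟨m - 1, by omega⟩
    rw [Finset.sum_range_succ']
    have hsum : ∑ i ∈ Finset.range n, a (i + 1) * b ^ (i + 1) + a 0 * b ^ 0 =
        a 0 + b * ∑ i ∈ Finset.range n, a (i + 1) * b ^ i := by
      rw [Finset.mul_sum, add_comm]
      congr 1
      · simp
      · exact Finset.sum_congr rfl fun i _ => by rw [pow_succ]; ring
    rw [hsum]
    have hdiv : (a 0 + b * ∑ i ∈ Finset.range n, a (i + 1) * b ^ i) / b ^ (k + 1) =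
        (∑ i ∈ Finset.range n, a (i + 1) * b ^ i) / b ^ k := by
      rw [pow_succ, mul_comm (b ^ k) b, ← Nat.div_div_eq_div_mul,
        Nat.add_mul_div_left _ _ (by omega : 0 < b),
        Nat.div_eq_of_lt (ha 0 (by omega)), zero_add]
    rw [hdiv]
    exact ih n (fun t => a (t + 1)) (fun t ht => ha (t + 1) (by omega)) (by omega)

lemma sum_div_mod (hb : 1 < b) :
    ∀ (m j : ℕ), j < b ^ m → ∑ k ∈ Finset.range m, j / b ^ k % b * b ^ k = j := by
  intro m
  induction m with
  | zero =>
    intro j hj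
    simp only [pow_zero, Nat.lt_one_iff] at hj
    simp [hj]
  | succ n ih =>
    intro j hj
    rw [Finset.sum_range_succ']
    have h1 : ∀ i, j / b ^ (i + 1) % b = (j / b) / b ^ i % b := by
      intro i
      rw [Nat.div_div_eq_div_mul, pow_succ, mul_comm (b ^ i) b]
    have h2 : ∑ i ∈ Finset.range n, j / b ^ (i + 1) % b * b ^ (i + 1) =
        b * ∑ i ∈ Finset.range n, (j / b) / b ^ i % b * b ^ i := by
      rw [Finset.mul_sum]
      refine Finset.sum_congr rfl fun i _ => ?_
      rw [h1 i, pow_succ]; ring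
    have h3 : j / b < b ^ n := by
      rw [Nat.div_lt_iff_lt_mul (by omega : 0 < b)]
      calc j < b ^ (n + 1) := hj
      _ = b ^ n * b := pow_succ b n
    rw [h2, ih _ h3]
    simp only [pow_zero, Nat.div_one, mul_one]
    exact Nat.div_add_mod j b

end aux

/-- The node set P_m = {z_i : 0 ≤ i < b^m} equals
{j·z_{b^{m-1}} mod 1 : 0 ≤ j < b^m}, i.e. P_m is the node set of a rank-1 lattice
generated by z_{b^{m-1}}.  Here `z ℓ` denotes z_{b^ℓ}, the points lie in [0,1)^d,
satisfy b^ℓ z_{b^n} mod 1 = z_{b^{n-ℓ}} for ℓ ≤ n, and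
z_i := (∑_ℓ i_ℓ z_{b^ℓ}) mod 1 with i_ℓ the b-ary digits of i. -/
theorem stmt2 (b d m : ℕ) (hb : b.Prime) (hm : 1 ≤ m)
    (z : ℕ → Fin d → ℝ)
    (hz : ∀ n c, z n c ∈ Set.Ico (0 : ℝ) 1)
    (hprop : ∀ n ℓ, ℓ ≤ n → ∀ c, Int.fract ((b : ℝ) ^ ℓ * z n c) = z (n - ℓ) c)
    (zi : ℕ → Fin d → ℝ)
    (hzi : ∀ i c, zi i c = Int.fract (∑ ℓ ∈ Finset.range (Nat.digits b i).length,
        (((Nat.digits b i).getD ℓ 0 : ℕ) : ℝ) * z ℓ c)) :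
    {x : Fin d → ℝ | ∃ i < b ^ m, x = zi i} =
      {x : Fin d → ℝ | ∃ j < b ^ m, x = fun c => Int.fract ((j : ℝ) * z (m - 1) c)} := by
  have hb1 : 1 < b := hb.one_lt
  -- the digit-reversal map
  set r : ℕ → ℕ := fun i => ∑ ℓ ∈ Finset.range m, i / b ^ ℓ % b * b ^ (m - 1 - ℓ) with hr
  -- r i as a standard digit sum
  have hr_eq : ∀ i, r i = ∑ t ∈ Finset.range m, (i / b ^ (m - 1 - t) % b) * b ^ t := by
    intro i
    simp only [hr]
    rw [← Finset.sum_range_reflect (fun ℓ => i / b ^ ℓ % b * b ^ (m - 1 - ℓ)) m]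
    refine Finset.sum_congr rfl fun t ht => ?_
    simp only [Finset.mem_range] at ht
    congr 2
    omega
  have hr_lt : ∀ i, r i < b ^ m := by
    intro i
    rw [hr_eq]
    exact sum_digits_lt hb1 _ (fun t _ => Nat.mod_lt _ (by omega))
  have hr_invol : ∀ j, j < b ^ m → r (r j) = j := by
    intro j hj
    have hdig : ∀ k, k < m → (r j) / b ^ k % b = j / b ^ (m - 1 - k) % b := by
      intro k hk
      rw [hr_eq]
      exact digit_of_sum hb1 k m _ (fun t _ => Nat.mod_lt _ (by omega)) hk
    simp only [hr]
    calc (∑ ℓ ∈ Finset.range m, r j / b ^ ℓ % b * b ^ (m - 1 - ℓ))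
        = ∑ ℓ ∈ Finset.range m, j / b ^ (m - 1 - ℓ) % b * b ^ (m - 1 - ℓ) :=
          Finset.sum_congr rfl fun ℓ hℓ => by
            rw [hdig ℓ (Finset.mem_range.mp hℓ)]
      _ = ∑ k ∈ Finset.range m, j / b ^ k % b * b ^ k :=
          Finset.sum_range_reflect (fun k => j / b ^ k % b * b ^ k) m
      _ = j := sum_div_mod hb1 m j hj
  -- key: zi i = fract (r i * z (m-1)) for i < b^m
  have key : ∀ i, i < b ^ m → ∀ c, zi i c = Int.fract ((r i : ℝ) * z (m - 1) c) := by
    intro i hi c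
    rw [hzi]
    have hlen : (Nat.digits b i).length ≤ m := digits_len_le hb1 hi
    -- rewrite sum over digits length as sum over range m
    have hsum1 : ∑ ℓ ∈ Finset.range (Nat.digits b i).length,
        (((Nat.digits b i).getD ℓ 0 : ℕ) : ℝ) * z ℓ c =
        ∑ ℓ ∈ Finset.range m, ((i / b ^ ℓ % b : ℕ) : ℝ) * z ℓ c := by
      rw [Finset.sum_subset (Finset.range_subset_range.mpr hlen)]
      · refine Finset.sum_congr rfl fun ℓ _ => ?_
        rw [getD_digits_eq hb1]
      · intro ℓ _ hℓ
        simp only [Finset.mem_range, not_lt] at hℓ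
        have : i < b ^ ℓ :=
          lt_of_lt_of_le (Nat.lt_base_pow_length_digits hb1)
            (Nat.pow_le_pow_right (by omega) hℓ)
        rw [getD_digits_eq hb1, Nat.div_eq_of_lt this]
        simp
    rw [hsum1]
    -- replace z ℓ c by fract (b^(m-1-ℓ) * z (m-1) c)
    have hzℓ : ∀ ℓ, ℓ < m → z ℓ c = Int.fract ((b : ℝ) ^ (m - 1 - ℓ) * z (m - 1) c) := by
      intro ℓ hℓ
      rw [hprop (m - 1) (m - 1 - ℓ) (by omega) c]
      congr 1
      omega
    have hsum2 : ∑ ℓ ∈ Finset.range m, ((i / b ^ ℓ % b : ℕ) : ℝ) * z ℓ c =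
        ∑ ℓ ∈ Finset.range m, ((i / b ^ ℓ % b : ℕ) : ℝ) *
          Int.fract ((b : ℝ) ^ (m - 1 - ℓ) * z (m - 1) c) := by
      refine Finset.sum_congr rfl fun ℓ hℓ => ?_
      rw [hzℓ ℓ (Finset.mem_range.mp hℓ)]
    rw [hsum2]
    -- remove the inner fracts
    rw [Int.fract_eq_fract]
    refine ⟨-∑ ℓ ∈ Finset.range m, ((i / b ^ ℓ % b : ℕ) : ℤ) * ⌊(b : ℝ) ^ (m - 1 - ℓ) * z (m - 1) c⌋, ?_⟩
    have hrc : ((r i : ℕ) : ℝ) = ∑ ℓ ∈ Finset.range m, ((i / b ^ ℓ % b : ℕ) : ℝ) * (b : ℝ) ^ (m - 1 - ℓ) := by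
      simp only [hr]
      push_cast
      ring_nf
      exact Finset.sum_congr rfl fun _ _ => mul_comm _ _
    rw [hrc, Finset.sum_mul, ← Finset.sum_sub_distrib, Int.cast_neg, Int.cast_sum, ← Finset.sum_neg_distrib]
    refine Finset.sum_congr rfl fun ℓ _ => ?_
    rw [Int.cast_mul, Int.cast_natCast, Int.fract]
    ring
  ext x
  simp only [Set.mem_setOf_eq]
  constructor
  · rintro ⟨i, hi, rfl⟩
    exact ⟨r i, hr_lt i, by funext c; exact key i hi c⟩
  · rintro ⟨j, hj, rfl⟩
    refine ⟨r j, hr_lt j, ?_⟩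
    funext c
    rw [key (r j) (hr_lt j) c, hr_invol j hj]
end

section
/- If l ∈ Z^d satisfies ⟨l, z_1⟩ = 1/b, then for any k ∈ Z^d, m ∈ N_0, and a'' ∈ {0,…,b−1}, ν̃_{m+1}(k + a'' b^m l) = ν̃_m(k) + ((a + a'') mod b)·b^m, where a ∈ {0,…,b−1} is determined by ν̃_{m+1}(k) = ν̃_m(k) + a b^m. In particular, for every a' ∈ {0,…,b−1} the set {κ ∈ Z^d : ν̃_{m+1}(κ) = ν̃_m(k) + a' b^m} is nonempty. -/
/-- If l ∈ Z^d satisfies ⟨l, z_1⟩ = 1/b, then for any k ∈ Z^d, m ∈ N_0 and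
a'' ∈ {0,…,b−1}, ν̃_{m+1}(k + a'' b^m l) = ν̃_m(k) + ((a + a'') mod b)·b^m, where
a ∈ {0,…,b−1} is determined by ν̃_{m+1}(k) = ν̃_m(k) + a b^m.  In particular, for every
a' ∈ {0,…,b−1} the set {κ ∈ Z^d : ν̃_{m+1}(κ) = ν̃_m(k) + a' b^m} is nonempty.
Here zc = z_{b^m} (so ν̃_{m+1}(k) = b^{m+1}⟨k,zc⟩), zp = z_{b^{m-1}}
(so ν̃_m(k) = b^m⟨k,zp⟩, with zp = 0 when m = 0 giving ν̃_0 = 0),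
b^m·zc mod 1 = z_1, and ⟨k,x⟩ := (∑_c k_c x_c) mod 1. -/
theorem stmt17 (b d m : ℕ) (hb : b.Prime)
    (z1 zp zc : Fin d → ℝ) (l k : Fin d → ℤ)
    (hl : Int.fract (∑ c, (l c : ℝ) * z1 c) = 1 / b)
    (hbm : ∀ c, Int.fract ((b : ℝ) ^ m * zc c) = z1 c)
    (a : ℕ) (halt : a < b)
    (ha : (b : ℝ) ^ (m + 1) * Int.fract (∑ c, (k c : ℝ) * zc c) =
      (b : ℝ) ^ m * Int.fract (∑ c, (k c : ℝ) * zp c) + (a : ℝ) * (b : ℝ) ^ m) :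
    (∀ a'' : ℕ, a'' < b →
        (b : ℝ) ^ (m + 1) *
            Int.fract (∑ c, ((k c + (a'' * b ^ m : ℕ) * l c : ℤ) : ℝ) * zc c) =
          (b : ℝ) ^ m * Int.fract (∑ c, (k c : ℝ) * zp c) +
            (((a + a'') % b : ℕ) : ℝ) * (b : ℝ) ^ m) ∧
      (∀ a' : ℕ, a' < b → ∃ κ : Fin d → ℤ,
        (b : ℝ) ^ (m + 1) * Int.fract (∑ c, (κ c : ℝ) * zc c) =
          (b : ℝ) ^ m * Int.fract (∑ c, (k c : ℝ) * zp c) + (a' : ℝ) * (b : ℝ) ^ m) := by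
  have hb2 : 2 ≤ b := hb.two_le
  have hbR : (0:ℝ) < b := by exact_mod_cast (by omega : 0 < b)
  have hbne : (b:ℝ) ≠ 0 := ne_of_gt hbR
  have hbmpos : (0:ℝ) < (b:ℝ)^m := pow_pos hbR m
  set t := Int.fract (∑ c, (k c : ℝ) * zp c) with hts
  have ht0 : 0 ≤ t := Int.fract_nonneg _
  have ht1 : t < 1 := Int.fract_lt_one _
  -- fract of the current sum
  have hfk : Int.fract (∑ c, (k c : ℝ) * zc c) = (t + a)/b := by
    rw [pow_succ] at ha
    field_simp
    nlinarith [ha]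
  -- key computation
  have key : ∀ a'' : ℕ, a'' < b →
      (b : ℝ) ^ (m + 1) *
          Int.fract (∑ c, ((k c + (a'' * b ^ m : ℕ) * l c : ℤ) : ℝ) * zc c) =
        (b : ℝ) ^ m * t + (((a + a'') % b : ℕ) : ℝ) * (b : ℝ) ^ m := by
    intro a'' ha''
    have hfloor : ∀ c, (b:ℝ)^m * zc c = (⌊(b:ℝ)^m * zc c⌋ : ℝ) + z1 c := by
      intro c
      have h := hbm c
      unfold Int.fract at h
      linarith
    have hz1 : ∑ c, (l c : ℝ) * z1 c = (⌊∑ c, (l c : ℝ) * z1 c⌋ : ℝ) + 1/b := by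
      unfold Int.fract at hl
      linarith
    set I1 : ℤ := ∑ c, l c * ⌊(b:ℝ)^m * zc c⌋ with hI1
    set I2 : ℤ := ⌊∑ c, (l c : ℝ) * z1 c⌋ with hI2
    have hsum : ∑ c, ((k c + (a'' * b ^ m : ℕ) * l c : ℤ) : ℝ) * zc c
        = (∑ c, (k c : ℝ) * zc c) + (a'' : ℝ) * (∑ c, (l c : ℝ) * ((b:ℝ)^m * zc c)) := by
      rw [Finset.mul_sum, ← Finset.sum_add_distrib]
      apply Finset.sum_congr rfl
      intro c _
      push_cast
      ring
    have hlsum : ∑ c, (l c : ℝ) * ((b:ℝ)^m * zc c) = (I1 : ℝ) + (I2 : ℝ) + 1/b := by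
      have : ∑ c, (l c : ℝ) * ((b:ℝ)^m * zc c)
          = ∑ c, ((l c : ℝ) * (⌊(b:ℝ)^m * zc c⌋ : ℝ) + (l c : ℝ) * z1 c) := by
        apply Finset.sum_congr rfl
        intro c _
        linear_combination (l c : ℝ) * (hfloor c)
      rw [this, Finset.sum_add_distrib, hz1, hI1]
      push_cast
      ring
    have htotal : ∑ c, ((k c + (a'' * b ^ m : ℕ) * l c : ℤ) : ℝ) * zc c
        = ((t + a)/b + (a'':ℝ)/b)
          + ((⌊∑ c, (k c : ℝ) * zc c⌋ + a'' * (I1 + I2) : ℤ) : ℝ) := by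
      rw [hsum, hlsum]
      have hfk' : (∑ c, (k c : ℝ) * zc c)
          = (t + a)/b + (⌊∑ c, (k c : ℝ) * zc c⌋ : ℝ) := by
        have h := hfk
        unfold Int.fract at h
        linarith
      push_cast
      linear_combination hfk'
    rw [htotal, Int.fract_add_intCast]
    -- now compute fract((t + a + a'')/b)
    set r : ℕ := (a + a'') % b with hr
    set q : ℕ := (a + a'') / b with hq
    have hdm : a + a'' = b * q + r := (Nat.div_add_mod _ _).symm
    have hdmR : (a:ℝ) + a'' = b * q + r := by exact_mod_cast hdm
    have hsplit : (t + a)/b + (a'':ℝ)/b = (t + r)/b + ((q:ℤ):ℝ) := by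
      field_simp
      push_cast
      linarith [hdmR]
    rw [hsplit, Int.fract_add_intCast]
    have hrb : r < b := Nat.mod_lt _ (by omega)
    have hrb' : (r:ℝ) ≤ b - 1 := by
      have : (r:ℝ) + 1 ≤ b := by exact_mod_cast hrb
      linarith
    have hfr : Int.fract ((t + r)/b) = (t + r)/b := by
      apply Int.fract_eq_self.mpr
      constructor
      · positivity
      · rw [div_lt_one hbR]; linarith
    rw [hfr, pow_succ]
    field_simp
  refine ⟨fun a'' ha'' => key a'' ha'', fun a' ha' => ?_⟩
  set a'' : ℕ := (b + a' - a) % b with ha''def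
  have ha''lt : a'' < b := Nat.mod_lt _ (by omega)
  have hmod : (a + a'') % b = a' := by
    rw [ha''def, Nat.add_mod_mod]
    have : a + (b + a' - a) = b + a' := by omega
    rw [this, Nat.add_mod_left, Nat.mod_eq_of_lt ha']
  refine ⟨fun c => k c + (a'' * b ^ m : ℕ) * l c, ?_⟩
  have := key a'' ha''lt
  rw [hmod] at this
  exact this
end

section
/- Suppose f lies in the cone C, i.e., Ŝ_{ℓ,m}(f) ≤ ω̂(m−ℓ) Š_m(f) for all ℓ ≤ m and Š_m(f) ≤ ω̊(m−ℓ) S_ℓ(f) for all ℓ* ≤ ℓ ≤ m. Then whenever ω̂(m−ℓ)ω̊(m−ℓ) < 1 and ℓ ≥ ℓ*, the true coefficient sum is bounded by the discrete one: S_ℓ(f) ≤ S̃_{ℓ,m}(f) / (1 − ω̂(m−ℓ)ω̊(m−ℓ)), and consequently |∫_{[0,1)^d} f dx − Î_m(f)| ≤ [ω̂(m)ω̊(m−ℓ) / (1 − ω̂(m−ℓ)ω̊(m−ℓ))] · S̃_{ℓ,m}(f). -/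
set_option maxHeartbeats 800000


/-- Suppose f lies in the cone C, i.e. Ŝ_{ℓ,m}(f) ≤ ω̂(m−ℓ)Š_m(f) for ℓ ≤ m
and Š_m(f) ≤ ω̊(m−ℓ)S_ℓ(f) for ℓ* ≤ ℓ ≤ m.  Then whenever ω̂(m−ℓ)ω̊(m−ℓ) < 1 and
ℓ* ≤ ℓ ≤ m, S_ℓ(f) ≤ S̃_{ℓ,m}(f)/(1 − ω̂(m−ℓ)ω̊(m−ℓ)), and consequently
|∫f − Î_m(f)| ≤ [ω̂(m)ω̊(m−ℓ)/(1 − ω̂(m−ℓ)ω̊(m−ℓ))]·S̃_{ℓ,m}(f).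
Here f̂_κ are the true Fourier coefficients (indexed via the bijection k̃), absolutely
summable; the discrete coefficients satisfy the aliasing identity
f̃_{m,κ} = f̂_κ + ∑_{λ≥1} f̂_{κ+λb^m} e^{2πiθ_{m,κ,λ}};
S_ℓ = ∑_{κ=⌊b^{ℓ−1}⌋}^{b^ℓ−1}|f̂_κ| (lower limit ⌊b^{ℓ−1}⌋ = b^ℓ/b in ℕ-division),
Ŝ_{ℓ,m} = ∑_{κ=⌊b^{ℓ−1}⌋}^{b^ℓ−1}∑_{λ≥1}|f̂_{κ+λb^m}|, Š_m = ∑_{κ≥b^m}|f̂_κ|,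
S̃_{ℓ,m} = ∑_{κ=⌊b^{ℓ−1}⌋}^{b^ℓ−1}|f̃_{m,κ}|; the cubature error err m = ∫f − Î_m(f)
satisfies |err m| ≤ Ŝ_{0,m}(f); ω̂, ω̊ are nonnegative. -/
theorem stmt18 (b : ℕ) (hb : 2 ≤ b) (lstar : ℕ)
    (fhat : ℕ → ℂ) (ftil : ℕ → ℕ → ℂ) (θ : ℕ → ℕ → ℕ → ℝ)
    (hsum : Summable fun κ : ℕ => ‖fhat κ‖)
    (halias : ∀ m κ : ℕ, ftil m κ = fhat κ +
      ∑' lam : ℕ, fhat (κ + (lam + 1) * b ^ m) *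
        Complex.exp (2 * Real.pi * Complex.I * (θ m κ lam : ℝ)))
    (S : ℕ → ℝ) (Shat : ℕ → ℕ → ℝ) (Scheck : ℕ → ℝ) (Stil : ℕ → ℕ → ℝ)
    (hS : ∀ ℓ, S ℓ = ∑ κ ∈ Finset.Ico (b ^ ℓ / b) (b ^ ℓ), ‖fhat κ‖)
    (hShat : ∀ ℓ m, Shat ℓ m = ∑ κ ∈ Finset.Ico (b ^ ℓ / b) (b ^ ℓ),
      ∑' lam : ℕ, ‖fhat (κ + (lam + 1) * b ^ m)‖)
    (hScheck : ∀ m, Scheck m = ∑' κ : ℕ, ‖fhat (κ + b ^ m)‖)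
    (hStil : ∀ ℓ m, Stil ℓ m = ∑ κ ∈ Finset.Ico (b ^ ℓ / b) (b ^ ℓ),
      ‖ftil m κ‖)
    (ωhat ωring : ℕ → ℝ)
    (hωhat : ∀ n, 0 ≤ ωhat n) (hωring : ∀ n, 0 ≤ ωring n)
    (hcone1 : ∀ ℓ m, ℓ ≤ m → Shat ℓ m ≤ ωhat (m - ℓ) * Scheck m)
    (hcone2 : ∀ ℓ m, lstar ≤ ℓ → ℓ ≤ m → Scheck m ≤ ωring (m - ℓ) * S ℓ)
    (err : ℕ → ℂ)
    (herr : ∀ m, ‖err m‖ ≤ Shat 0 m)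
    (ℓ m : ℕ) (hl : lstar ≤ ℓ) (hlm : ℓ ≤ m)
    (hprod : ωhat (m - ℓ) * ωring (m - ℓ) < 1) :
    S ℓ ≤ Stil ℓ m / (1 - ωhat (m - ℓ) * ωring (m - ℓ)) ∧
      ‖err m‖ ≤
        ωhat m * ωring (m - ℓ) / (1 - ωhat (m - ℓ) * ωring (m - ℓ)) * Stil ℓ m := by

  set p := ωhat (m - ℓ) * ωring (m - ℓ) with hp
  have hp0 : 0 ≤ p := mul_nonneg (hωhat _) (hωring _)
  have hp1 : 0 < 1 - p := by linarith
  -- key: S ℓ ≤ Stil ℓ m + Shat ℓ m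
  have key : S ℓ ≤ Stil ℓ m + Shat ℓ m := by
    rw [hS, hStil, hShat, ← Finset.sum_add_distrib]
    apply Finset.sum_le_sum
    intro κ _
    have hbm : 0 < b ^ m := pow_pos (by omega) m
    have hinj : Function.Injective (fun lam : ℕ => κ + (lam + 1) * b ^ m) := by
      intro x y h
      simp only at h
      have := Nat.eq_of_mul_eq_mul_right hbm (by omega : (x+1) * b ^ m = (y+1) * b ^ m)
      omega
    have hsum' : Summable fun lam : ℕ => ‖fhat (κ + (lam + 1) * b ^ m)‖ :=
      hsum.comp_injective hinj
    have habs : ∀ lam : ℕ, ‖fhat (κ + (lam + 1) * b ^ m) *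
        Complex.exp (2 * Real.pi * Complex.I * (θ m κ lam : ℝ))‖
        = ‖fhat (κ + (lam + 1) * b ^ m)‖ := by
      intro lam
      rw [norm_mul, Complex.norm_exp]
      have : (2 * ↑Real.pi * Complex.I * ((θ m κ lam : ℝ) : ℂ)).re = 0 := by
        simp [Complex.mul_re, Complex.mul_im]
      rw [this, Real.exp_zero, mul_one]
    have hsum'' : Summable fun lam : ℕ => fhat (κ + (lam + 1) * b ^ m) *
        Complex.exp (2 * Real.pi * Complex.I * (θ m κ lam : ℝ)) := by
      rw [← summable_norm_iff]
      simpa only [habs] using hsum'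
    have heq : fhat κ = ftil m κ - ∑' lam : ℕ, fhat (κ + (lam + 1) * b ^ m) *
        Complex.exp (2 * Real.pi * Complex.I * (θ m κ lam : ℝ)) := by
      rw [halias m κ]; ring
    calc ‖fhat κ‖
        ≤ ‖ftil m κ‖ + ‖∑' lam : ℕ, fhat (κ + (lam + 1) * b ^ m) *
            Complex.exp (2 * Real.pi * Complex.I * (θ m κ lam : ℝ))‖ := by
          rw [heq]; exact norm_sub_le _ _
      _ ≤ ‖ftil m κ‖ + ∑' lam : ℕ, ‖fhat (κ + (lam + 1) * b ^ m)‖ := by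
          gcongr
          have hns : Summable fun lam : ℕ => ‖fhat (κ + (lam + 1) * b ^ m) *
              Complex.exp (2 * Real.pi * Complex.I * (θ m κ lam : ℝ))‖ := by
            simpa only [habs] using hsum'
          have hle := norm_tsum_le_tsum_norm hns
          refine hle.trans_eq ?_
          exact tsum_congr fun lam => by rw [habs]
  have hShatle : Shat ℓ m ≤ p * S ℓ := by
    calc Shat ℓ m ≤ ωhat (m - ℓ) * Scheck m := hcone1 ℓ m hlm
      _ ≤ ωhat (m - ℓ) * (ωring (m - ℓ) * S ℓ) := by
          exact mul_le_mul_of_nonneg_left (hcone2 ℓ m hl hlm) (hωhat _)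
      _ = p * S ℓ := by rw [hp]; ring
  have h1 : S ℓ ≤ Stil ℓ m / (1 - p) := by
    rw [le_div_iff₀ hp1]
    nlinarith [key, hShatle]
  refine ⟨h1, ?_⟩
  have hS0 : 0 ≤ S ℓ := by
    rw [hS]; exact Finset.sum_nonneg fun _ _ => norm_nonneg _
  calc ‖err m‖ ≤ Shat 0 m := herr m
    _ ≤ ωhat (m - 0) * Scheck m := hcone1 0 m (Nat.zero_le m)
    _ = ωhat m * Scheck m := by rw [Nat.sub_zero]
    _ ≤ ωhat m * (ωring (m - ℓ) * S ℓ) :=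
        mul_le_mul_of_nonneg_left (hcone2 ℓ m hl hlm) (hωhat _)
    _ ≤ ωhat m * (ωring (m - ℓ) * (Stil ℓ m / (1 - p))) := by
        exact mul_le_mul_of_nonneg_left
          (mul_le_mul_of_nonneg_left h1 (hωring _)) (hωhat _)
    _ = ωhat m * ωring (m - ℓ) / (1 - p) * Stil ℓ m := by ring
end

section
/- Under the aliasing identity and the cone conditions, the observable discrete coefficient sum is bounded above by the true coefficient sum: S̃_{ℓ,m}(f) ≤ [1 + ω̂(m−ℓ)ω̊(m−ℓ)] S_ℓ(f) for ℓ* ≤ ℓ ≤ m. Consequently, if m* := min{m' ≥ ℓ*+r : C(m')[1 + ω̂(r)ω̊(r)] S_{m'−r}(f) ≤ ε} with C(m) := ω̂(m)ω̊(r)/(1 − ω̂(r)ω̊(r)), then the adaptive algorithm stopping at the first m ≥ ℓ*+r with C(m) S̃_{m−r,m}(f) ≤ ε satisfies m ≤ m*. -/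
/-- Under the aliasing identity and the cone conditions, the observable
discrete coefficient sum is bounded by the true one:
S̃_{ℓ,m}(f) ≤ [1 + ω̂(m−ℓ)ω̊(m−ℓ)]·S_ℓ(f) for ℓ* ≤ ℓ ≤ m.  Consequently, with
C(m) := ω̂(m)ω̊(r)/(1 − ω̂(r)ω̊(r)) and
m* := an element of {m' ≥ ℓ*+r : C(m')[1 + ω̂(r)ω̊(r)]S_{m'−r}(f) ≤ ε}, the adaptive
algorithm's stopping index min{m ≥ ℓ*+r : C(m)S̃_{m−r,m}(f) ≤ ε} satisfies m ≤ m*.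
Notation as in the cone framework: f̂_κ true Fourier coefficients (absolutely summable),
f̃_{m,κ} = f̂_κ + ∑_{λ≥1} f̂_{κ+λb^m}e^{2πiθ_{m,κ,λ}} discrete coefficients,
S_ℓ = ∑_{κ=⌊b^{ℓ−1}⌋}^{b^ℓ−1}|f̂_κ|, S̃_{ℓ,m} = ∑_{κ=⌊b^{ℓ−1}⌋}^{b^ℓ−1}|f̃_{m,κ}|,
Ŝ_{ℓ,m} = ∑_{κ=⌊b^{ℓ−1}⌋}^{b^ℓ−1}∑_{λ≥1}|f̂_{κ+λb^m}|, Š_m = ∑_{κ≥b^m}|f̂_κ|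
(⌊b^{ℓ−1}⌋ = b^ℓ/b in ℕ-division); cone: Ŝ_{ℓ,m} ≤ ω̂(m−ℓ)Š_m for ℓ ≤ m and
Š_m ≤ ω̊(m−ℓ)S_ℓ for ℓ* ≤ ℓ ≤ m, with r fixed such that ω̂(r)ω̊(r) < 1. -/
theorem stmt19 (b : ℕ) (hb : 2 ≤ b) (lstar : ℕ) (hlstar : 1 ≤ lstar)
    (fhat : ℕ → ℂ) (ftil : ℕ → ℕ → ℂ) (θ : ℕ → ℕ → ℕ → ℝ)
    (hsum : Summable fun κ : ℕ => ‖fhat κ‖)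
    (halias : ∀ m κ : ℕ, ftil m κ = fhat κ +
      ∑' lam : ℕ, fhat (κ + (lam + 1) * b ^ m) *
        Complex.exp (2 * Real.pi * Complex.I * (θ m κ lam : ℝ)))
    (S : ℕ → ℝ) (Shat : ℕ → ℕ → ℝ) (Scheck : ℕ → ℝ) (Stil : ℕ → ℕ → ℝ)
    (hS : ∀ ℓ, S ℓ = ∑ κ ∈ Finset.Ico (b ^ ℓ / b) (b ^ ℓ), ‖fhat κ‖)
    (hShat : ∀ ℓ m, Shat ℓ m = ∑ κ ∈ Finset.Ico (b ^ ℓ / b) (b ^ ℓ),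
      ∑' lam : ℕ, ‖fhat (κ + (lam + 1) * b ^ m)‖)
    (hScheck : ∀ m, Scheck m = ∑' κ : ℕ, ‖fhat (κ + b ^ m)‖)
    (hStil : ∀ ℓ m, Stil ℓ m = ∑ κ ∈ Finset.Ico (b ^ ℓ / b) (b ^ ℓ),
      ‖ftil m κ‖)
    (ωhat ωring : ℕ → ℝ)
    (hωhat : ∀ n, 0 ≤ ωhat n) (hωring : ∀ n, 0 ≤ ωring n)
    (hcone1 : ∀ ℓ m, ℓ ≤ m → Shat ℓ m ≤ ωhat (m - ℓ) * Scheck m)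
    (hcone2 : ∀ ℓ m, lstar ≤ ℓ → ℓ ≤ m → Scheck m ≤ ωring (m - ℓ) * S ℓ)
    (r : ℕ) (hr1 : 1 ≤ r) (hr : ωhat r * ωring r < 1)
    (C : ℕ → ℝ) (hC : ∀ n, C n = ωhat n * ωring r / (1 - ωhat r * ωring r))
    (ε : ℝ) (mstar : ℕ) (hm1 : lstar + r ≤ mstar)
    (hm2 : C mstar * ((1 + ωhat r * ωring r) * S (mstar - r)) ≤ ε) :
    (∀ ℓ m, lstar ≤ ℓ → ℓ ≤ m →
        Stil ℓ m ≤ (1 + ωhat (m - ℓ) * ωring (m - ℓ)) * S ℓ) ∧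
      sInf {m' : ℕ | lstar + r ≤ m' ∧ C m' * Stil (m' - r) m' ≤ ε} ≤ mstar := by
  have key : ∀ ℓ m, lstar ≤ ℓ → ℓ ≤ m →
      Stil ℓ m ≤ (1 + ωhat (m - ℓ) * ωring (m - ℓ)) * S ℓ := by
    intro ℓ m hl hlm
    have hsummab : ∀ κ : ℕ, Summable fun lam : ℕ =>
        ‖fhat (κ + (lam + 1) * b ^ m)‖ := by
      intro κ
      apply hsum.comp_injective
      intro x y hxy
      have hbm : 0 < b ^ m := pow_pos (by omega) m
      simp only at hxy
      have : (x + 1) * b ^ m = (y + 1) * b ^ m := by omega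
      exact by
        have := Nat.eq_of_mul_eq_mul_right hbm this
        omega
    have habs : ∀ κ : ℕ, ‖ftil m κ‖ ≤ ‖fhat κ‖ +
        ∑' lam : ℕ, ‖fhat (κ + (lam + 1) * b ^ m)‖ := by
      intro κ
      rw [halias m κ]
      refine le_trans (norm_add_le _ _) (add_le_add_right ?_ _)
      have h1 : ‖∑' lam : ℕ, fhat (κ + (lam + 1) * b ^ m) *
          Complex.exp (2 * Real.pi * Complex.I * (θ m κ lam : ℝ))‖ ≤
          ∑' lam : ℕ, ‖fhat (κ + (lam + 1) * b ^ m) *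
          Complex.exp (2 * Real.pi * Complex.I * (θ m κ lam : ℝ))‖ := by
        have hs2 : Summable fun lam : ℕ => ‖fhat (κ + (lam + 1) * b ^ m) *
            Complex.exp (2 * Real.pi * Complex.I * (θ m κ lam : ℝ))‖ := by
          refine (hsummab κ).congr fun lam => ?_
          rw [norm_mul]
          have : ‖Complex.exp (2 * Real.pi * Complex.I * (θ m κ lam : ℝ))‖ = 1 := by
            rw [Complex.norm_exp]
            have : (2 * Real.pi * Complex.I * (θ m κ lam : ℝ)).re = 0 := by
              simp [Complex.mul_re, Complex.mul_im]
            rw [this, Real.exp_zero]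
          rw [this, mul_one]
        have hs2' : Summable fun lam : ℕ => ‖fhat (κ + (lam + 1) * b ^ m) *
            Complex.exp (2 * Real.pi * Complex.I * (θ m κ lam : ℝ))‖ := by
          simpa using hs2
        simpa using norm_tsum_le_tsum_norm hs2'
      refine h1.trans (le_of_eq (tsum_congr fun lam => ?_))
      rw [norm_mul]
      have : ‖Complex.exp (2 * Real.pi * Complex.I * (θ m κ lam : ℝ))‖ = 1 := by
        rw [Complex.norm_exp]
        have : (2 * Real.pi * Complex.I * (θ m κ lam : ℝ)).re = 0 := by
          simp [Complex.mul_re, Complex.mul_im]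
        rw [this, Real.exp_zero]
      rw [this, mul_one]
    have h2 : Stil ℓ m ≤ S ℓ + Shat ℓ m := by
      rw [hStil, hS, hShat, ← Finset.sum_add_distrib]
      exact Finset.sum_le_sum fun κ _ => habs κ
    have h3 : Shat ℓ m ≤ ωhat (m - ℓ) * (ωring (m - ℓ) * S ℓ) :=
      (hcone1 ℓ m hlm).trans
        (mul_le_mul_of_nonneg_left (hcone2 ℓ m hl hlm) (hωhat _))
    nlinarith [h2, h3]
  refine ⟨key, Nat.sInf_le ?_⟩
  have hrm : r ≤ mstar := le_trans (Nat.le_add_left r lstar) hm1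
  have hsub : mstar - (mstar - r) = r := by omega
  have hk := key (mstar - r) mstar (by omega) (by omega)
  rw [hsub] at hk
  have hCpos : 0 ≤ C mstar := by
    rw [hC]
    exact div_nonneg (mul_nonneg (hωhat _) (hωring _)) (by linarith)
  exact ⟨hm1, le_trans (mul_le_mul_of_nonneg_left hk hCpos) hm2⟩
end
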